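/- arXiv:2506.22061 — 3 statements merged into one kernel-verified Lean document; each statement's English description precedes it below -/
import Mathlib

section
/- Let α and β be primitive words with |α| ≠ |β|, and let u = α^M, v = β^N for some M, N ∈ ℕ. If u and v, placed as factors of two words at given positions, have an overlap of size at least |α| + |β| − gcd(|α|, |β|), then the overlap contains a conflict, i.e., the overlapping segments of u and v disagree at some position. -/
/-- `wpow w n` is the `n`-fold concatenation (iteration) of the word `w`. -/
def wpow {A : Type*} (w : List A) : ℕ → List A
  | 0 => []
  | n + 1 => w ++ wpow w n

/-- A word is primitive if it cannot be written as `v ^ k` for any `k ≥ 2`. -/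
def Primitive {A : Type*} (w : List A) : Prop :=
  ∀ (v : List A) (k : ℕ), 2 ≤ k → w ≠ wpow v k

lemma icc_card (a b c d : ℕ) :
    (Finset.Icc a b ∩ Finset.Icc c d).card = min b d + 1 - max a c := by
  have : Finset.Icc a b ∩ Finset.Icc c d = Finset.Icc (max a c) (min b d) := by
    ext x; simp [Finset.mem_Icc]; omega
  rw [this, Nat.card_Icc]

lemma wpow_length {A : Type*} (w : List A) (n : ℕ) : (wpow w n).length = n * w.length := by
  induction n with
  | zero => simp [wpow]
  | succ n ih => simp [wpow, ih, Nat.succ_mul]; ring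

lemma wpow_getElem? {A : Type*} (w : List A) (n j : ℕ) (h : j < n * w.length) :
    (wpow w n)[j]? = w[j % w.length]? := by
  induction n generalizing j with
  | zero => omega
  | succ n ih =>
    show (w ++ wpow w n)[j]? = _
    rcases lt_or_ge j w.length with hj | hj
    · rw [List.getElem?_append, if_pos hj, Nat.mod_eq_of_lt hj]
    · rw [List.getElem?_append_right hj, ih _ (by simp only [Nat.succ_mul] at h; omega),
        Nat.mod_eq_sub_mod hj]

lemma chain {B : Type*} (f : ℕ → B) (g m : ℕ)
    (h : ∀ i, i + g < m → f i = f (i + g)) :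
    ∀ k i, i + k * g < m → f i = f (i + k * g) := by
  intro k
  induction k with
  | zero => simp
  | succ k ih =>
    intro i hi
    have h1 : f i = f (i + g) := h i (by nlinarith [Nat.succ_mul k g])
    have h2 : f (i + g) = f (i + g + k * g) := ih (i + g) (by rw [Nat.succ_mul] at hi; omega)
    rw [h1, h2]; ring_nf

lemma primitive_ne_nil {A : Type*} (w : List A) (h : Primitive w) : w ≠ [] := by
  intro hw
  exact h [] 2 (by norm_num) (by rw [hw]; simp [wpow])

lemma alpha_contra {A : Type*} (α : List A) (hα : Primitive α) (g t : ℕ)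
    (hg : g ∣ α.length) (hgpos : 0 < g) (hlt : g < α.length)
    (hper : ∀ i, i + g < α.length →
      α[(t + i) % α.length]? = α[(t + i + g) % α.length]?) : False := by
  set a := α.length with ha
  have hapos : 0 < a := by omega
  set W : ℕ → Option A := fun i => α[(t + i) % a]? with hW
  have hWper : ∀ i, i + g < a → W i = W (i + g) := by
    intro i hi
    show α[(t + i) % a]? = α[(t + (i + g)) % a]?
    rw [← Nat.add_assoc]
    exact hper i hi
  have hWmod : ∀ i, i < a → W i = W (i % g) := by
    intro i hi
    have hmd : i % g + i / g * g = i := Nat.mod_add_div' i g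
    have := chain W g a hWper (i / g) (i % g) (by omega)
    rw [hmd] at this
    exact this.symm
  have main : ∀ j, j < a → α[j]? = W ((j % g + (a - t % a)) % g) := by
    intro j hj
    set i := (j + (a - t % a)) % a with hi
    have hia : i < a := Nat.mod_lt _ hapos
    have e1 : (t + i) % a = j := by
      rw [hi, Nat.add_mod_mod]
      have e2 : t + (j + (a - t % a)) = j + a * (t / a + 1) := by
        have h1 := Nat.div_add_mod t a
        have h2 : t % a < a := Nat.mod_lt _ hapos
        rw [Nat.mul_add, Nat.mul_one]
        omega
      rw [e2, Nat.add_mul_mod_self_left, Nat.mod_eq_of_lt hj]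
    have e3 : α[j]? = W i := by rw [hW]; simp only [e1]
    rw [e3, hWmod i hia]
    congr 1
    rw [hi, Nat.mod_mod_of_dvd _ hg, Nat.mod_add_mod]
  obtain ⟨c, hc⟩ := hg
  have hc2 : 2 ≤ c := by
    by_contra h
    push_neg at h
    interval_cases c <;> omega
  have htl : (α.take g).length = g := by
    rw [List.length_take]
    omega
  have heq : α = wpow (α.take g) c := by
    apply List.ext_getElem?
    intro j
    rcases lt_or_ge j a with hj | hj
    · rw [wpow_getElem? _ c j (by rw [htl, Nat.mul_comm]; omega), htl, List.getElem?_take,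
        if_pos (Nat.mod_lt _ hgpos)]
      rw [main j hj, main (j % g) (lt_of_lt_of_le (Nat.mod_lt _ hgpos) (le_of_lt hlt))]
      congr 1
      rw [Nat.mod_mod_of_dvd j (dvd_refl g)]
    · rw [List.getElem?_eq_none (by omega), List.getElem?_eq_none]
      rw [wpow_length, htl, Nat.mul_comm]
      omega
  exact hα (α.take g) c hc2 heq

lemma fw_aux {B : Type*} (f : ℕ → B) :
    ∀ s a b n, a + b ≤ s → 1 ≤ b → b ≤ a →
      a + b - Nat.gcd a b ≤ n →
      (∀ i, i + a < n → f i = f (i + a)) →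
      (∀ i, i + b < n → f i = f (i + b)) →
      ∀ i, i + Nat.gcd a b < n → f i = f (i + Nat.gcd a b) := by
  intro s
  induction s with
  | zero => intro a b n h hb hba; exfalso; simp at h; omega
  | succ s ihs =>
    intro a b n hs hb hba hn pa pb i hi
    rcases eq_or_lt_of_le hba with rfl | hlt
    · -- a = b
      rw [Nat.gcd_self] at hi ⊢
      exact pa i hi
    · -- b < a
      have hg : Nat.gcd (a - b) b = Nat.gcd a b := Nat.gcd_sub_self_left hba
      have hgb : Nat.gcd a b ≤ b := Nat.gcd_le_right a hb
      have hga : Nat.gcd a b ∣ a := Nat.gcd_dvd_left a b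
      have hgdb : Nat.gcd a b ∣ b := Nat.gcd_dvd_right a b
      have hgpos : 0 < Nat.gcd a b := Nat.gcd_pos_of_pos_right a hb
      set g := Nat.gcd a b with hgdef
      -- prefix of length n - b has periods a - b and b
      have pab : ∀ j, j + (a - b) < n - b → f j = f (j + (a - b)) := by
        intro j hj
        have h1 : f j = f (j + a) := pa j (by omega)
        have h2 : f (j + (a - b)) = f (j + (a - b) + b) := pb _ (by omega)
        have : j + (a - b) + b = j + a := by omega
        rw [h1, h2, this]
      have pb' : ∀ j, j + b < n - b → f j = f (j + b) := fun j hj => pb j (by omega)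
      -- IH: cases on whether a - b ≥ b or not; may need to swap
      have IH : ∀ j, j + g < n - b → f j = f (j + g) := by
        rcases le_total b (a - b) with hc | hc
        · have := ihs (a - b) b (n - b) (by omega) hb hc (by rw [hg]; omega) pab pb'
          rw [hg] at this; exact this
        · have hab1 : 1 ≤ a - b := by
            rcases Nat.eq_zero_or_pos (a - b) with h0 | h0
            · exfalso; omega
            · exact h0
          have := ihs b (a - b) (n - b) (by omega) hab1 hc
            (by rw [Nat.gcd_comm, hg]; omega) pb' pab
          rw [Nat.gcd_comm, hg] at this; exact this
      -- extension
      rcases lt_or_ge (i + g) (n - b) with hcase | hcase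
      · exact IH i hcase
      rcases le_or_gt b i with hcase2 | hcase2
      · have h1 : f (i - b) = f i := by
          have := pb (i - b) (by omega)
          rwa [Nat.sub_add_cancel hcase2] at this
        have h2 : f (i - b + g) = f (i + g) := by
          have := pb (i - b + g) (by omega)
          have e : i - b + g + b = i + g := by omega
          rwa [e] at this
        have h3 : f (i - b) = f (i - b + g) := IH (i - b) (by omega)
        rw [← h1, h3, h2]
      · -- i < b, i + g ≥ n - b : forces a = b + g
        have hab : a - b = g := by
          have h1 : g ∣ a - b := Nat.dvd_sub hga hgdb
          have h2 : a - b < 2 * g := by omega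
          have h3 : 0 < a - b := by omega
          rcases h1 with ⟨c, hc⟩
          have hcc : c = 1 := by
            rcases Nat.lt_or_ge c 2 with h4 | h4
            · interval_cases c <;> omega
            · exfalso
              have : 2 * g ≤ g * c := by nlinarith
              omega
          subst hcc; omega
        have hnb : 2 * b ≤ n := by omega
        have hib : b ≤ i + g := by omega
        have h1 : f (i + g - b) = f (i + g) := by
          have := pb (i + g - b) (by omega)
          rwa [Nat.sub_add_cancel hib] at this
        -- f (i + g - b) = f i via chain with k = b/g - 1 steps of g inside prefix
        obtain ⟨c, hc⟩ := hgdb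
        have hc1 : 1 ≤ c := by
          rcases Nat.eq_zero_or_pos c with rfl | h
          · simp at hc; omega
          · exact h
        obtain ⟨d, rfl⟩ : ∃ d, c = d + 1 := ⟨c - 1, by omega⟩
        have key : d * g = b - g := by
          have : b = d * g + g := by rw [hc]; ring
          omega
        have h2 : f (i + g - b) = f i := by
          have := chain f g (n - b) IH d (i + g - b) (by omega)
          have e : i + g - b + d * g = i := by omega
          rwa [e] at this
        rw [← h2, h1]

lemma fw {B : Type*} (f : ℕ → B) (a b n : ℕ) (ha : 1 ≤ a) (hb : 1 ≤ b)
    (hn : a + b - Nat.gcd a b ≤ n)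
    (pa : ∀ i, i + a < n → f i = f (i + a))
    (pb : ∀ i, i + b < n → f i = f (i + b)) :
    ∀ i, i + Nat.gcd a b < n → f i = f (i + Nat.gcd a b) := by
  rcases le_total b a with h | h
  · exact fw_aux f (a + b) a b n le_rfl hb h hn pa pb
  · have := fw_aux f (a + b) b a n (by omega) ha h (by rw [Nat.gcd_comm]; omega) pb pa
    rw [Nat.gcd_comm b a] at this
    exact this


/-- Any overlap of size at least `|α| + |β| - gcd (|α|, |β|)` between factors
`u = α ^ M` and `v = β ^ N` of two words, for primitive `α, β` of distinct
lengths, contains a conflict: a common position where the two words disagree. -/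
theorem overlap_conflict {A : Type*} (α β : List A) (M N : ℕ)
    (hα : Primitive α) (hβ : Primitive β) (hlen : α.length ≠ β.length)
    (p s p' s' : List A)
    (hoverlap : α.length + β.length - Nat.gcd α.length β.length ≤
      ((Finset.Icc (p.length + 1) (p.length + (wpow α M).length)) ∩
       (Finset.Icc (p'.length + 1) (p'.length + (wpow β N).length))).card) :
    ∃ i : ℕ, p.length ≤ i ∧ i < p.length + (wpow α M).length ∧
      p'.length ≤ i ∧ i < p'.length + (wpow β N).length ∧
      (p ++ wpow α M ++ s)[i]? ≠ (p' ++ wpow β N ++ s')[i]? := by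
  by_contra hcon
  push_neg at hcon
  have hαnil := primitive_ne_nil α hα
  have hβnil := primitive_ne_nil β hβ
  have hapos : 0 < α.length := List.length_pos_iff.mpr hαnil
  have hbpos : 0 < β.length := List.length_pos_iff.mpr hβnil
  set g := Nat.gcd α.length β.length with hgdef
  have hga : g ∣ α.length := Nat.gcd_dvd_left _ _
  have hgb : g ∣ β.length := Nat.gcd_dvd_right _ _
  have hgpos : 0 < g := Nat.gcd_pos_of_pos_left _ hapos
  have hgla : g ≤ α.length := Nat.le_of_dvd hapos hga
  have hglb : g ≤ β.length := Nat.le_of_dvd hbpos hgb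
  have hlu : (wpow α M).length = M * α.length := wpow_length α M
  have hlv : (wpow β N).length = N * β.length := wpow_length β N
  rw [icc_card] at hoverlap
  set m := max p.length p'.length with hm
  set e := min (p.length + (wpow α M).length) (p'.length + (wpow β N).length) with he
  set n := e - m with hndef
  have hn : α.length + β.length - g ≤ n := by omega
  have hm1 : p.length ≤ m := le_max_left _ _
  have hm2 : p'.length ≤ m := le_max_right _ _
  have hend1 : m + n ≤ p.length + (wpow α M).length := by omega
  have hend2 : m + n ≤ p'.length + (wpow β N).length := by omega
  set f : ℕ → Option A := fun i => (p ++ wpow α M ++ s)[m + i]? with hf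
  have hfα : ∀ i, i < n → f i = α[(m + i - p.length) % α.length]? := by
    intro i hi
    show (p ++ wpow α M ++ s)[m + i]? = _
    rw [List.getElem?_append, if_pos (by rw [List.length_append]; omega),
      List.getElem?_append_right (by omega : p.length ≤ m + i),
      wpow_getElem? α M _ (by omega)]
  have hfβ : ∀ i, i < n → f i = β[(m + i - p'.length) % β.length]? := by
    intro i hi
    have hcc := hcon (m + i) (by omega) (by omega) (by omega) (by omega)
    show (p ++ wpow α M ++ s)[m + i]? = _
    rw [hcc, List.getElem?_append, if_pos (by rw [List.length_append]; omega),
      List.getElem?_append_right (by omega : p'.length ≤ m + i),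
      wpow_getElem? β N _ (by omega)]
  have pa : ∀ i, i + α.length < n → f i = f (i + α.length) := by
    intro i hi
    rw [hfα i (by omega), hfα (i + α.length) (by omega)]
    congr 1
    have e1 : m + (i + α.length) - p.length = (m + i - p.length) + α.length := by omega
    rw [e1, Nat.add_mod_right]
  have pb : ∀ i, i + β.length < n → f i = f (i + β.length) := by
    intro i hi
    rw [hfβ i (by omega), hfβ (i + β.length) (by omega)]
    congr 1
    have e1 : m + (i + β.length) - p'.length = (m + i - p'.length) + β.length := by omega
    rw [e1, Nat.add_mod_right]
  have per := fw f α.length β.length n hapos hbpos hn pa pb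
  rcases Nat.lt_or_ge g α.length with hcase | hcase
  · apply alpha_contra α hα g (m - p.length) hga hgpos hcase
    intro i hig
    have h3 := per i (by omega)
    rw [hfα i (by omega), hfα (i + g) (by omega)] at h3
    have e1 : m + i - p.length = (m - p.length) + i := by omega
    have e2 : m + (i + g) - p.length = (m - p.length) + i + g := by omega
    rw [e1, e2] at h3
    exact h3
  · have hgeq : g = α.length := le_antisymm hgla hcase
    have hgb' : g < β.length := lt_of_le_of_ne hglb (by rw [hgeq]; exact hlen)
    apply alpha_contra β hβ g (m - p'.length) hgb hgpos hgb'
    intro i hig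
    have h3 := per i (by omega)
    rw [hfβ i (by omega), hfβ (i + g) (by omega)] at h3
    have e1 : m + i - p'.length = (m - p'.length) + i := by omega
    have e2 : m + (i + g) - p'.length = (m - p'.length) + i + g := by omega
    rw [e1, e2] at h3
    exact h3
end

section
/- Let u and v be two words such that there is no word w with both u ∈ w^* and v ∈ w^* (i.e., u and v are not powers of the same word). Then for any L, M ≥ 2, the word α = u^L · v^M is primitive. -/
namespace LSaux
variable {A : Type*}

@[simp] theorem wpow_zero (w : List A) : wpow w 0 = [] := rfl
theorem wpow_succ (w : List A) (n : ℕ) : wpow w (n+1) = w ++ wpow w n := rfl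
@[simp] theorem wpow_one (w : List A) : wpow w 1 = w := by
  simp [wpow]

theorem wpow_add (w : List A) (m n : ℕ) : wpow w (m+n) = wpow w m ++ wpow w n := by
  induction m with
  | zero => simp
  | succ k ih =>
      have : k + 1 + n = (k + n) + 1 := by omega
      rw [this, wpow_succ, ih, wpow_succ, List.append_assoc]

theorem wpow_two (w : List A) : wpow w 2 = w ++ w := by
  simp [wpow]

@[simp] theorem length_wpow (w : List A) (n : ℕ) : (wpow w n).length = n * w.length := by
  induction n with
  | zero => simp
  | succ k ih => simp [wpow_succ, ih]; ring

theorem wpow_wpow (w : List A) (m n : ℕ) : wpow (wpow w m) n = wpow w (m*n) := by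
  induction n with
  | zero => simp
  | succ k ih =>
      rw [wpow_succ, ih]
      rw [show m * (k+1) = m + m * k by ring, wpow_add]

theorem wpow_nil (n : ℕ) : wpow ([] : List A) n = [] := by
  induction n with
  | zero => rfl
  | succ k ih => simp [wpow_succ, ih]

theorem wpow_ne_nil {w : List A} (hw : w ≠ []) {n : ℕ} (hn : 1 ≤ n) : wpow w n ≠ [] := by
  intro h
  have := congrArg List.length h
  simp at this
  rcases this with h1 | h1
  · omega
  · exact hw h1

theorem prim_ne_nil {w : List A} (hw : Primitive w) : w ≠ [] := by
  intro h
  exact hw [] 2 le_rfl (by rw [h, wpow_nil])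

/-- the workhorse splitting lemma -/
theorem split_long {P Q R S : List A} (h : P ++ Q = R ++ S) (hl : R.length ≤ P.length) :
    ∃ T, P = R ++ T ∧ S = T ++ Q := by
  refine ⟨P.drop R.length, ?_, ?_⟩
  · have h1 : P.take R.length = R := by
      have := congrArg (List.take R.length) h
      rwa [List.take_append_of_le_length hl, List.take_left] at this
    conv_lhs => rw [← List.take_append_drop R.length P]
    rw [h1]
  · have h2 : P = R ++ P.drop R.length := by
      have h1 : P.take R.length = R := by
        have := congrArg (List.take R.length) h
        rwa [List.take_append_of_le_length hl, List.take_left] at this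
      conv_lhs => rw [← List.take_append_drop R.length P]
      rw [h1]
    rw [h2, List.append_assoc] at h
    exact (List.append_cancel_left h).symm

/-- `a ++ (b++a)^n = (a++b)^n ++ a` -/
theorem rot_pow (a b : List A) (n : ℕ) :
    a ++ wpow (b ++ a) n = wpow (a ++ b) n ++ a := by
  induction n with
  | zero => simp
  | succ k ih =>
      rw [wpow_succ, wpow_succ]
      calc a ++ ((b ++ a) ++ wpow (b ++ a) k) = (a ++ b) ++ (a ++ wpow (b ++ a) k) := by
            simp [List.append_assoc]
        _ = (a ++ b) ++ (wpow (a ++ b) k ++ a) := by rw [ih]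
        _ = ((a ++ b) ++ wpow (a ++ b) k) ++ a := by simp [List.append_assoc]

theorem reverse_wpow (w : List A) (n : ℕ) : (wpow w n).reverse = wpow w.reverse n := by
  induction n with
  | zero => simp
  | succ k ih =>
      rw [wpow_succ, List.reverse_append, ih]
      rw [show k + 1 = k + 1 from rfl, wpow_add, wpow_one]

theorem prim_reverse {w : List A} (hw : Primitive w) : Primitive w.reverse := by
  intro v k hk h
  apply hw v.reverse k hk
  have := congrArg List.reverse h
  rwa [List.reverse_reverse, reverse_wpow] at this

/-- commutation: `s ++ t = t ++ s` implies a common root. -/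
theorem comm_common : ∀ n (s t : List A), s.length + t.length ≤ n → s ++ t = t ++ s →
    ∃ ρ i j, s = wpow ρ i ∧ t = wpow ρ j := by
  intro n
  induction n with
  | zero =>
      intro s t hlen _
      have hs : s = [] := List.length_eq_zero_iff.mp (by omega)
      have ht : t = [] := List.length_eq_zero_iff.mp (by omega)
      exact ⟨[], 1, 1, by simp [hs], by simp [ht]⟩
  | succ m ih =>
      intro s t hlen h
      rcases eq_or_ne s [] with rfl | hs
      · exact ⟨t, 0, 1, rfl, by simp⟩
      rcases eq_or_ne t [] with rfl | ht
      · exact ⟨s, 1, 0, by simp, rfl⟩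
      have hs0 : 0 < s.length := List.length_pos_iff.mpr hs
      have ht0 : 0 < t.length := List.length_pos_iff.mpr ht
      rcases le_or_gt s.length t.length with hle | hlt
      · -- t = s ++ T
        obtain ⟨T, hT1, hT2⟩ := split_long h.symm hle
        -- s ++ T = T ++ s
        have h2 : s ++ T = T ++ s := by
          rw [hT1] at h
          have : s ++ (s ++ T) = s ++ (T ++ s) := by
            simpa [List.append_assoc] using h
          exact List.append_cancel_left this
        have hTlen : s.length + T.length ≤ m := by
          have := congrArg List.length hT1
          simp at this; omega
        obtain ⟨ρ, i, j, h3, h4⟩ := ih s T hTlen h2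
        exact ⟨ρ, i, i + j, h3, by rw [hT1, h3, h4, wpow_add]⟩
      · obtain ⟨T, hT1, hT2⟩ := split_long h hlt.le
        have h2 : t ++ T = T ++ t := by
          rw [hT1] at h
          have : t ++ (T ++ t) = t ++ (t ++ T) := by
            simpa [List.append_assoc] using h
          exact (List.append_cancel_left this).symm
        have hTlen : t.length + T.length ≤ m := by
          have := congrArg List.length hT1
          simp at this; omega
        obtain ⟨ρ, i, j, h3, h4⟩ := ih t T hTlen h2
        exact ⟨ρ, i + j, i, by rw [hT1, h3, h4, wpow_add], h3⟩

/-- conjugacy structure: `b ++ X = X ++ a` with `b ≠ []`. -/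
theorem conj_struct : ∀ n (X a b : List A), X.length ≤ n → b ≠ [] → b ++ X = X ++ a →
    ∃ u v k, b = u ++ v ∧ a = v ++ u ∧ X = wpow (u ++ v) k ++ u := by
  intro n
  induction n with
  | zero =>
      intro X a b hn hb h
      have hX : X = [] := List.length_eq_zero_iff.mp (by omega)
      subst hX
      simp at h
      exact ⟨[], b, 0, by simp, by simp [h], by simp⟩
  | succ m ih =>
      intro X a b hn hb h
      rcases le_or_gt X.length b.length with hle | hlt
      · -- b = X ++ w
        obtain ⟨w, hw1, hw2⟩ := split_long h hle
        exact ⟨X, w, 0, hw1, hw2, by simp⟩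
      · -- X = b ++ T
        obtain ⟨T, hT1, hT2⟩ := split_long h.symm hlt.le
        -- hT1 : X = b ++ T, hT2 : X = T ++ a
        have h2 : b ++ T = T ++ a := by rw [← hT1, hT2]
        have hb0 : 0 < b.length := List.length_pos_iff.mpr hb
        have hTlen : T.length ≤ m := by
          have := congrArg List.length hT1
          simp at this; omega
        obtain ⟨u, v, k, h3, h4, h5⟩ := ih T a b hTlen hb h2
        refine ⟨u, v, k+1, h3, h4, ?_⟩
        rw [hT1, h5, h3, show k+1 = 1+k by omega, wpow_add, wpow_one]; simp [List.append_assoc]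


/-- existence of a primitive root -/
theorem prim_root : ∀ n (w : List A), w.length ≤ n → w ≠ [] →
    ∃ ρ e, 1 ≤ e ∧ Primitive ρ ∧ w = wpow ρ e := by
  intro n
  induction n with
  | zero =>
      intro w hn hw
      exact absurd (List.length_eq_zero_iff.mp (by omega)) hw
  | succ m ih =>
      intro w hn hw
      by_cases hp : Primitive w
      · exact ⟨w, 1, le_rfl, hp, by simp⟩
      · simp only [Primitive, not_forall] at hp
        obtain ⟨v, k, hk, hv⟩ := hp
        rw [not_not] at hv
        have hvne : v ≠ [] := by
          intro h; subst h; rw [wpow_nil] at hv; exact hw hv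
        have hv0 : 0 < v.length := List.length_pos_iff.mpr hvne
        have hlen : v.length ≤ m := by
          have := congrArg List.length hv
          simp at this
          have hw0 : 0 < w.length := List.length_pos_iff.mpr hw
          nlinarith
        obtain ⟨ρ, e, he, hρ, hρv⟩ := ih v hlen hvne
        exact ⟨ρ, e * k, Nat.mul_pos he (by omega), hρ, by rw [hv, hρv, wpow_wpow]⟩

/-- primitive word in its own square occurs only trivially -/
theorem occ_in_sq {x P S : List A} (hx : Primitive x) (h : x ++ x = P ++ x ++ S) :
    P = [] ∨ S = [] := by
  by_contra hc
  push_neg at hc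
  obtain ⟨hP, hS⟩ := hc
  have hlen : P.length + S.length = x.length := by
    have := congrArg List.length h
    simp at this; omega
  have hP0 : 0 < P.length := List.length_pos_iff.mpr hP
  have hS0 : 0 < S.length := List.length_pos_iff.mpr hS
  have hPle : P.length ≤ x.length := by omega
  -- x = P ++ U  and  x ++ S = U ++ x
  rw [List.append_assoc] at h
  obtain ⟨U, hU1, hU2⟩ := split_long h (by omega)
  -- hU1 : x = P ++ U,  hU2 : x ++ S = U ++ x
  obtain ⟨T, hT1, hT2⟩ := split_long hU2 (by
    have := congrArg List.length hU1; simp at this; omega)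
  -- hT1 : x = U ++ T, hT2 : x = T ++ S
  have hPT : P = T ∧ U = S := by
    have hlenP : P.length = T.length := by
      have e1 := congrArg List.length hU1
      have e2 := congrArg List.length hT1
      have e3 := congrArg List.length hT2
      simp at e1 e2 e3; omega
    exact List.append_inj (by rw [← hU1, hT2]) hlenP
  obtain ⟨rfl, rfl⟩ := hPT
  have hcomm : P ++ U = U ++ P := by rw [← hU1, hT1]
  obtain ⟨ρ, i, j, h1, h2⟩ := comm_common (P.length + U.length) P U le_rfl hcomm
  have hρ : ρ ≠ [] := by
    intro hh; subst hh; rw [wpow_nil] at h1; exact hP h1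
  have hi : 1 ≤ i := by
    rcases Nat.eq_zero_or_pos i with h0 | h0
    · subst h0; simp at h1; exact absurd h1 hP
    · exact h0
  have hj : 1 ≤ j := by
    rcases Nat.eq_zero_or_pos j with h0 | h0
    · subst h0; simp at h2; exact absurd h2 hS
    · exact h0
  exact hx ρ (i+j) (by omega) (by rw [hU1, h1, h2, wpow_add])

/-- occurrences of a primitive word in its powers are aligned -/
theorem occ_in_pow : ∀ K {x P S : List A}, Primitive x → wpow x K = P ++ x ++ S →
    x.length ∣ P.length := by
  intro K
  induction K with
  | zero =>
      intro x P S hx h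
      simp [wpow] at h
      exact absurd h.2.1 (prim_ne_nil hx)
  | succ k ih =>
      intro x P S hx h
      have hx0 : 0 < x.length := List.length_pos_iff.mpr (prim_ne_nil hx)
      rcases le_or_gt P.length x.length with hle | hlt
      · rcases Nat.eq_zero_or_pos k with h0 | h0
        · subst h0
          rw [wpow_one] at h
          have := congrArg List.length h
          simp at this
          have : P.length = 0 := by omega
          simp [this]
        · -- k ≥ 1 : x^(k+1) = x ++ x ++ x^(k-1)
          obtain ⟨k', rfl⟩ : ∃ k', k = k' + 1 := ⟨k - 1, by omega⟩
          have hsplit : (x ++ x) ++ wpow x k' = (P ++ x) ++ S := by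
            rw [show k' + 1 + 1 = 2 + k' by omega, wpow_add, wpow_two] at h
            simpa [List.append_assoc] using h
          obtain ⟨T, hT1, hT2⟩ := split_long hsplit (by simp; omega)
          rcases occ_in_sq hx hT1 with h1 | h1
          · simp [h1]
          · subst h1
            have := congrArg List.length hT1
            simp at this
            have : P.length = x.length := by omega
            simp [this]
      · -- P = x ++ P'
        have hsplit : x ++ wpow x k = P ++ (x ++ S) := by
          rw [← wpow_succ]; simpa [List.append_assoc] using h
        obtain ⟨P', hP1, hP2⟩ := split_long hsplit.symm hlt.le
        have := ih hx (by rw [hP2, List.append_assoc])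
        have hlenP : P.length = x.length + P'.length := by
          have := congrArg List.length hP1; simp at this; omega
        rw [hlenP]
        exact Nat.dvd_add ⟨1, by omega⟩ this


/-- a prefix of `x^K` whose length is `a*|x|` equals `x^a` -/
theorem pow_prefix_eq {x W R : List A} {K a : ℕ} (ha : a ≤ K)
    (h : wpow x K = W ++ R) (hlen : W.length = a * x.length) : W = wpow x a := by
  obtain ⟨b, rfl⟩ := Nat.exists_eq_add_of_le ha
  rw [wpow_add] at h
  exact (List.append_inj h.symm (by simp [hlen])).1

/-- a factor of `ζ^N` whose length is `m*|ζ|` is an `m`-th power -/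
theorem factor_of_pow : ∀ N {ζ Q W P : List A} {m : ℕ}, ζ ≠ [] →
    wpow ζ N = Q ++ W ++ P → W.length = m * ζ.length →
    ∃ η : List A, η.length = ζ.length ∧ W = wpow η m := by
  intro N
  induction N with
  | zero =>
      intro ζ Q W P m hζ h hW
      simp [wpow] at h
      have hm : m = 0 := by
        have h0 : W = [] := h.2.1
        have h1 := congrArg List.length h0
        have hζ0 : 0 < ζ.length := List.length_pos_iff.mpr hζ
        simp [hW] at h1
        rcases h1 with h1|h1
        · exact h1
        · exact absurd h1 hζ
      exact ⟨ζ, rfl, by simp [hm, h.2.1]⟩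
  | succ n ih =>
      intro ζ Q W P m hζ h hW
      have hζ0 : 0 < ζ.length := List.length_pos_iff.mpr hζ
      rcases le_or_gt ζ.length Q.length with hle | hlt
      · -- peel a ζ from Q
        have h' : ζ ++ wpow ζ n = Q ++ (W ++ P) := by
          rw [← wpow_succ]; simpa [List.append_assoc] using h
        obtain ⟨Q', hQ1, hQ2⟩ := split_long h'.symm hle
        exact ih hζ (by rw [hQ2, List.append_assoc]) hW
      · -- Q is a proper prefix of ζ : ζ = Q ++ e
        rcases Nat.eq_zero_or_pos m with hm | hm
        · refine ⟨ζ, rfl, ?_⟩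
          subst hm
          have hζ0 : 0 < ζ.length := List.length_pos_iff.mpr hζ
          simp at hW
          simp [hW]
        have h' : ζ ++ wpow ζ n = Q ++ (W ++ P) := by
          rw [← wpow_succ]; simpa [List.append_assoc] using h
        obtain ⟨e, he1, he2⟩ := split_long h' hlt.le
        -- he1 : ζ = Q ++ e, he2 : W ++ P = e ++ wpow ζ n
        have hident : e ++ wpow ζ n = wpow (e ++ Q) n ++ e := by
          conv_lhs => rw [he1]
          exact rot_pow e Q n
        have hlen_eQ : (e ++ Q).length = ζ.length := by
          have := congrArg List.length he1; simp at this ⊢; omega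
        rcases le_or_gt m n with hmn | hmn
        · -- W is a prefix of (e++Q)^n
          have h2 : wpow (e++Q) m ++ (wpow (e++Q) (n-m) ++ e) = W ++ P := by
            rw [← List.append_assoc, ← wpow_add]
            rw [show m + (n - m) = n by omega]
            rw [← hident, ← he2]
          exact ⟨e ++ Q, hlen_eQ, ((List.append_inj h2 (by simp [hW, hlen_eQ])).1).symm⟩
        · -- m = n+1 forced; W = ζ^(n+1)
          have htot := congrArg List.length h
          simp [hW] at htot
          have hmn1 : m = n + 1 := by nlinarith
          have hQP : Q.length = 0 ∧ P.length = 0 := by constructor <;> nlinarith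
          have hQ : Q = [] := List.length_eq_zero_iff.mp hQP.1
          have hP : P = [] := List.length_eq_zero_iff.mp hQP.2
          subst hQ; subst hP
          simp at h
          exact ⟨ζ, rfl, by rw [← h, hmn1]⟩

/-- rotation preserves primitivity -/
theorem prim_rot {u v : List A} (h : Primitive (u ++ v)) : Primitive (v ++ u) := by
  intro ρ k hk hvu
  have hne : (v ++ u) ≠ [] := by
    intro hh
    rw [List.append_eq_nil_iff] at hh
    apply prim_ne_nil h
    simp [hh.1, hh.2]
  have hρ : ρ ≠ [] := by
    intro hh; subst hh; rw [wpow_nil] at hvu; exact hne hvu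
  -- primitive root of v ++ u
  obtain ⟨ζ, e, he, hζ, hvu2⟩ := prim_root (v++u).length (v++u) le_rfl hne
  have he2 : 2 ≤ e := by
    rcases Nat.lt_or_ge e 2 with h1 | h1
    · have he1 : e = 1 := by omega
      subst he1
      rw [wpow_one] at hvu2
      rw [hvu2] at hvu
      exact (hζ ρ k hk hvu).elim
    · exact h1
  -- (v++u)(v++u) = ζ^(2e) = v ++ (u++v) ++ u
  have hfact : wpow ζ (e+e) = v ++ (u ++ v) ++ u := by
    rw [wpow_add, ← hvu2]; simp [List.append_assoc]
  have hlen : (u ++ v).length = e * ζ.length := by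
    have := congrArg List.length hvu2; simp at this ⊢; omega
  obtain ⟨η, hη, huv⟩ := factor_of_pow (e+e) (prim_ne_nil hζ) hfact hlen
  exact h η e he2 huv

/-- Lemma A*: long power prefix of a primitive power forces alignment. -/
theorem pow_prefix_div {x y R : List A} {K L : ℕ} (hx : Primitive x) (hy : y ≠ [])
    (h : wpow x K = wpow y L ++ R) (hlong : x.length ≤ (L-1) * y.length) :
    ∃ a, 1 ≤ a ∧ y = wpow x a := by
  have hx0 : 0 < x.length := List.length_pos_iff.mpr (prim_ne_nil hx)
  have hy0 : 0 < y.length := List.length_pos_iff.mpr hy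
  have hL2 : 2 ≤ L := by
    by_contra hc
    push_neg at hc
    interval_cases L <;> simp_all <;> omega
  -- y^(L-1) = x ++ T
  have hsplit1 : wpow y (L-1) ++ (y ++ R) = wpow x K := by
    rw [h, show L = (L-1) + 1 by omega, wpow_add, wpow_one]
    simp [List.append_assoc]
  have hK1 : 1 ≤ K := by
    by_contra hc
    push_neg at hc
    interval_cases K
    simp [wpow] at h
    have := congrArg List.length h.1
    simp at this
    rcases this with h1|h1
    · omega
    · exact hy h1
  have hxK : wpow x K = x ++ wpow x (K-1) := by
    conv_lhs => rw [show K = 1 + (K-1) by omega]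
    rw [wpow_add, wpow_one]
  obtain ⟨T, hT1, hT2⟩ := split_long (hsplit1.trans hxK) (by simpa using hlong)
  -- hT1 : y^(L-1) = x ++ T
  -- x^K = y ++ x ++ (T ++ R)
  have hocc : wpow x K = y ++ x ++ (T ++ R) := by
    rw [h, show L = 1 + (L-1) by omega, wpow_add, wpow_one, hT1]
    simp [List.append_assoc]
  have hdvd : x.length ∣ y.length := occ_in_pow K hx hocc
  obtain ⟨a, ha⟩ := hdvd
  have ha1 : 1 ≤ a := by
    rcases Nat.eq_zero_or_pos a with h0|h0
    · subst h0; simp at ha; exact absurd ha hy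
    · exact h0
  refine ⟨a, ha1, ?_⟩
  -- y is a prefix of x^K of length a*|x|
  have haK : a ≤ K := by
    have hlen := congrArg List.length h
    simp at hlen
    have h1 : y.length ≤ L * y.length := Nat.le_mul_of_pos_left y.length (by omega)
    have h2 : L * y.length ≤ K * x.length := by omega
    have h3 : a * x.length ≤ K * x.length := by
      rw [Nat.mul_comm] at ha
      omega
    exact Nat.le_of_mul_le_mul_right h3 hx0
  have hy' : wpow x K = y ++ (wpow y (L-1) ++ R) := by
    rw [h]
    conv_lhs => rw [show L = 1 + (L-1) by omega]
    rw [wpow_add, wpow_one, List.append_assoc]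
  exact pow_prefix_eq haK hy' (by rw [ha, Nat.mul_comm])

/-- two powers of primitive words that coincide have equal base -/
theorem prim_pow_eq_aux {s t : List A} {P Q : ℕ} (hs : Primitive s) (ht : Primitive t)
    (hP : 1 ≤ P) (hQ : 1 ≤ Q) (h : wpow s P = wpow t Q) (hle : s.length ≤ t.length) :
    s = t := by
  have hs0 : 0 < s.length := List.length_pos_iff.mpr (prim_ne_nil hs)
  have ht0 : 0 < t.length := List.length_pos_iff.mpr (prim_ne_nil ht)
  have hlen : P * s.length = Q * t.length := by
    have := congrArg List.length h; simpa using this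
  rcases Nat.lt_or_ge Q 2 with hQ1 | hQ2
  · -- Q = 1 : t = s^P
    have hQ1' : Q = 1 := by omega
    subst hQ1'
    rw [wpow_one] at h
    rcases Nat.lt_or_ge P 2 with hP1 | hP2
    · have : P = 1 := by omega
      subst this; rw [wpow_one] at h; exact h
    · exact absurd h.symm (ht s P hP2)
  · -- t^Q = s ++ t ++ D
    obtain ⟨P', rfl⟩ : ∃ P', P = P' + 1 := ⟨P-1, by omega⟩
    have hPs : t.length ≤ P' * s.length := by nlinarith [hlen, hle, hQ2, ht0]
    -- s^P' = t ++ D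
    have e2 : wpow t Q = t ++ wpow t (Q-1) := by
      conv_lhs => rw [show Q = 1 + (Q-1) by omega]
      rw [wpow_add, wpow_one]
    have hsplit : wpow s P' ++ s = t ++ wpow t (Q-1) := by
      have e1 : wpow s (P'+1) = wpow s P' ++ s := by rw [wpow_add, wpow_one]
      rw [← e2, ← h, e1]
    obtain ⟨D, hD1, hD2⟩ := split_long hsplit (by simpa using hPs)
    have hocc : wpow t Q = s ++ t ++ D := by
      rw [← h, show P' + 1 = 1 + P' by omega, wpow_add, wpow_one, hD1]
      simp [List.append_assoc]
    have hdvd : t.length ∣ s.length := occ_in_pow Q ht hocc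
    have : t.length ≤ s.length := Nat.le_of_dvd hs0 hdvd
    have hst : s.length = t.length := by omega
    have h2 : s ++ wpow s P' = t ++ wpow t (Q-1) := by
      have e1 : wpow s (P'+1) = s ++ wpow s P' := by
        rw [show P'+1 = 1+P' by omega, wpow_add, wpow_one]
      rw [← e2, ← h, e1]
    exact (List.append_inj h2 hst).1

theorem prim_pow_eq {s t : List A} {P Q : ℕ} (hs : Primitive s) (ht : Primitive t)
    (hP : 1 ≤ P) (hQ : 1 ≤ Q) (h : wpow s P = wpow t Q) : s = t := by
  rcases le_or_gt s.length t.length with hle | hlt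
  · exact prim_pow_eq_aux hs ht hP hQ h hle
  · exact (prim_pow_eq_aux ht hs hQ hP h.symm hlt.le).symm

/-- the power lemma: `z^M = x^c` forces a common root -/
theorem pow_common {z x : List A} {M c : ℕ} (hz : z ≠ []) (hx : x ≠ [])
    (hM : 1 ≤ M) (hc : 1 ≤ c) (h : wpow z M = wpow x c) :
    ∃ ρ i j, z = wpow ρ i ∧ x = wpow ρ j := by
  obtain ⟨ζ, e, he, hζ, hzζ⟩ := prim_root z.length z le_rfl hz
  obtain ⟨ξ, f, hf, hξ, hxξ⟩ := prim_root x.length x le_rfl hx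
  have : wpow ζ (e*M) = wpow ξ (f*c) := by
    rw [← wpow_wpow, ← wpow_wpow, ← hzζ, ← hxξ, h]
  have heq : ζ = ξ := prim_pow_eq hζ hξ (Nat.mul_pos he hM) (Nat.mul_pos hf hc) this
  exact ⟨ζ, e, f, hzζ, by rw [hxξ, heq]⟩


theorem pow_front {K : ℕ} (hK : 1 ≤ K) (x : List A) : wpow x K = x ++ wpow x (K-1) := by
  conv_lhs => rw [show K = 1 + (K-1) by omega]
  rw [wpow_add, wpow_one]

/-- The statement of the Lyndon–Schützenberger theorem, as induction motive. -/
def LSstmt (A : Type*) (n : ℕ) : Prop :=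
  ∀ (x y z : List A) (K L M : ℕ), (wpow x K).length = n → 2 ≤ K → 2 ≤ L → 2 ≤ M →
    wpow x K = wpow y L ++ wpow z M → ∃ ρ i j, y = wpow ρ i ∧ z = wpow ρ j

/-- Core argument: all words primitive and the `y` side at least as long as the `z` side. -/
theorem core1 {n : ℕ} (ih : ∀ m, m < n → LSstmt A m)
    (x y z : List A) (K L M : ℕ) (hn : (wpow x K).length = n)
    (hx : Primitive x) (hy : Primitive y) (hz : Primitive z)
    (hK : 2 ≤ K) (hL : 2 ≤ L) (hM : 2 ≤ M)
    (hside : M * z.length ≤ L * y.length)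
    (heq : wpow x K = wpow y L ++ wpow z M) :
    ∃ ρ i j, y = wpow ρ i ∧ z = wpow ρ j := by
  have hxne := prim_ne_nil hx
  have hyne := prim_ne_nil hy
  have hzne := prim_ne_nil hz
  have hx0 : 0 < x.length := List.length_pos_iff.mpr hxne
  have hy0 : 0 < y.length := List.length_pos_iff.mpr hyne
  have hz0 : 0 < z.length := List.length_pos_iff.mpr hzne
  have hlen : K * x.length = L * y.length + M * z.length := by
    have := congrArg List.length heq; simpa using this
  have h2p : 2 * x.length ≤ K * x.length := Nat.mul_le_mul_right x.length hK
  have hLy1 : y.length ≤ L * y.length := Nat.le_mul_of_pos_left y.length (by omega)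
  have hMz1 : z.length ≤ M * z.length := Nat.le_mul_of_pos_left z.length (by omega)
  have hLyp : x.length ≤ L * y.length := by omega
  rcases le_or_gt x.length ((L-1) * y.length) with hcaseA | hcaseB
  · -- CASE A
    obtain ⟨a, ha1, hya⟩ := pow_prefix_div hx hyne heq hcaseA
    have hyL : wpow y L = wpow x (a*L) := by rw [hya, wpow_wpow]
    have haL : a * L < K := by
      have h1 : (a*L) * x.length + M * z.length = K * x.length := by
        have := congrArg List.length hyL
        simp at this
        omega
      have h2 : (a*L) * x.length < K * x.length := by omega
      exact Nat.lt_of_mul_lt_mul_right h2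
    have hc : wpow z M = wpow x (K - a*L) := by
      have h1 : wpow x K = wpow x (a*L) ++ wpow x (K - a*L) := by
        rw [← wpow_add]; congr 1; omega
      rw [heq, hyL] at h1
      exact List.append_cancel_left h1
    obtain ⟨ρ, i, j, hzρ, hxρ⟩ := pow_common hzne hxne (by omega) (by omega) hc
    exact ⟨ρ, j * a, i, by rw [hya, hxρ, wpow_wpow], hzρ⟩
  · -- CASE B
    have hyp : y.length < x.length := by
      have : y.length ≤ (L-1) * y.length := Nat.le_mul_of_pos_left y.length (by omega)
      omega
    have hLyP : x.length < L * y.length := by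
      rcases lt_or_eq_of_le hLyp with h1 | h1
      · exact h1
      · -- x = y^L contradicts primitivity
        exfalso
        have hxK : wpow x K = x ++ wpow x (K-1) := pow_front (by omega) x
        have hsp : wpow y L ++ wpow z M = x ++ wpow x (K-1) := by rw [← heq, hxK]
        have := (List.append_inj hsp (by simp; omega)).1
        exact hx y L hL this.symm
    -- split : y^L = x ++ s,  x^(K-1) = s ++ z^M
    have hxK : wpow x K = x ++ wpow x (K-1) := pow_front (by omega) x
    obtain ⟨s, hs1, hs2⟩ := split_long (by rw [← heq, hxK] :
      wpow y L ++ wpow z M = x ++ wpow x (K-1)) (by simp; omega)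
    have hslen : s.length = L * y.length - x.length := by
      have := congrArg List.length hs1; simp at this; omega
    have hsne : s ≠ [] := by
      intro h0; rw [h0] at hslen; simp at hslen; omega
    have hs0 : 0 < s.length := List.length_pos_iff.mpr hsne
    have hsy : s.length < y.length := by
      have hLL : L * y.length = (L-1) * y.length + y.length := by
        conv_lhs => rw [show L = (L-1) + 1 by omega]
        rw [Nat.add_mul]; omega
      omega
    -- split : x = s ++ g, z^M = g ++ x^(K-2)
    have hxK1 : wpow x (K-1) = x ++ wpow x (K-2) := by
      rw [pow_front (by omega) x, show K-1-1 = K-2 by omega]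
    obtain ⟨g, hg1, hg2⟩ := split_long (by rw [← hs2, hxK1] :
      x ++ wpow x (K-2) = s ++ wpow z M) (by omega)
    -- split : y = s ++ t
    have hyLf : y ++ wpow y (L-1) = s ++ (g ++ s) := by
      rw [← pow_front (by omega) y, hs1, hg1, List.append_assoc]
    obtain ⟨t, hy_st, _⟩ := split_long hyLf (by omega)
    have htlen : t.length = y.length - s.length := by
      have := congrArg List.length hy_st; simp at this; omega
    have htne : t ≠ [] := by
      intro h0; rw [h0] at htlen; simp at htlen; omega
    rcases eq_or_lt_of_le hK with hK2 | hK3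
    · -- K = 2 : the crux reduction (ts)^L = z^M ++ s^2
      exfalso
      have hK2' : K = 2 := hK2.symm
      subst hK2'
      have hgz : g = wpow z M := by
        have : wpow z M = g ++ wpow x 0 := hg2
        simpa using this.symm
      have hxsz : x = s ++ wpow z M := by rw [hg1, hgz]
      have hkey : wpow (t ++ s) L = wpow z M ++ wpow s 2 := by
        have h1 : s ++ wpow (t ++ s) L = s ++ (wpow z M ++ wpow s 2) := by
          rw [rot_pow, ← hy_st, hs1, hxsz, wpow_two]
          simp [List.append_assoc]
        exact List.append_cancel_left h1
      have hmlt : (wpow (t++s) L).length < n := by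
        have h1 : (wpow (t++s) L).length = L * (t.length + s.length) := by simp
        have h2 : t.length + s.length = y.length := by
          have := congrArg List.length hy_st; simp at this; omega
        rw [h1, h2, ← hn]
        simp
        omega
      obtain ⟨ρ, i, j, hzρ, hsρ⟩ :=
        ih _ hmlt (t++s) z s L M 2 rfl hL hM le_rfl hkey
      have hi : 1 ≤ i := by
        rcases Nat.eq_zero_or_pos i with h0|h0
        · subst h0; simp at hzρ; exact absurd hzρ hzne
        · exact h0
      have hj : 1 ≤ j := by
        rcases Nat.eq_zero_or_pos j with h0|h0
        · subst h0; simp at hsρ; exact absurd hsρ hsne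
        · exact h0
      have hxρ : x = wpow ρ (j + i * M) := by
        rw [hxsz, hsρ, hzρ, wpow_wpow, ← wpow_add]
      exact hx ρ (j + i*M) (by nlinarith) hxρ
    · -- K ≥ 3
      rcases le_or_gt x.length ((M-1) * z.length) with hcaseA' | hcaseB'
      · -- CASE A' (mirror) : z is a power of x
        have hrev : wpow x.reverse K = wpow z.reverse M ++ wpow y.reverse L := by
          have := congrArg List.reverse heq
          rwa [reverse_wpow, List.reverse_append, reverse_wpow, reverse_wpow] at this
        obtain ⟨b, hb1, hzb⟩ := pow_prefix_div (prim_reverse hx)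
          (by simpa using hzne) hrev (by simpa using hcaseA')
        have hzxb : z = wpow x b := by
          have := congrArg List.reverse hzb
          rwa [List.reverse_reverse, reverse_wpow, List.reverse_reverse] at this
        have hzL : wpow z M = wpow x (b*M) := by rw [hzxb, wpow_wpow]
        have hbM : b * M < K := by
          have h1 : L * y.length + (b*M) * x.length = K * x.length := by
            have := congrArg List.length hzL
            simp at this
            omega
          have h2 : (b*M) * x.length < K * x.length := by omega
          exact Nat.lt_of_mul_lt_mul_right h2
        have hc : wpow y L = wpow x (K - b*M) := by
          have h1 : wpow x K = wpow x (K - b*M) ++ wpow x (b*M) := by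
            rw [← wpow_add]; congr 1; omega
          rw [heq, hzL] at h1
          exact List.append_cancel_right h1
        obtain ⟨ρ, i, j, hyρ, hxρ⟩ := pow_common hyne hxne (by omega) (by omega) hc
        exact ⟨ρ, i, j * b, hyρ, by rw [hzxb, hxρ, wpow_wpow]⟩
      · -- CASE B' : the deep case, K = 3, L = 2
        exfalso
        have hzp : z.length < x.length := by
          have : z.length ≤ (M-1) * z.length := Nat.le_mul_of_pos_left z.length (by omega)
          omega
        have hLsplit : L * y.length = (L-1) * y.length + y.length := by
          conv_lhs => rw [show L = (L-1) + 1 by omega]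
          rw [Nat.add_mul]; omega
        have hMsplit : M * z.length = (M-1) * z.length + z.length := by
          conv_lhs => rw [show M = (M-1) + 1 by omega]
          rw [Nat.add_mul]; omega
        have hK3' : K = 3 := by
          by_contra hne
          have hK4 : 4 ≤ K := by omega
          have : 4 * x.length ≤ K * x.length := Nat.mul_le_mul_right x.length hK4
          omega
        subst hK3'
        have hL2 : L = 2 := by
          by_contra hne
          have hL3 : 3 ≤ L := by omega
          -- 3p ≤ 2·L|y| and L|y| < p + |y| give p < 2|y|, and (L-1)|y| < p gives L < 3
          have h1 : 2 * y.length ≤ (L-1) * y.length := by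
            have : 2 ≤ L - 1 := by omega
            exact Nat.mul_le_mul_right y.length this
          omega
        subst hL2
        obtain ⟨M', rfl⟩ : ∃ M', M = M' + 1 := ⟨M-1, by omega⟩
        have hM'1 : 1 ≤ M' := by omega
        have hMz : (M'+1) * z.length = M' * z.length + z.length := by ring
        have hMsplit' : M' * z.length < x.length := by
          have : (M'+1) - 1 = M' := by omega
          rwa [this] at hcaseB'
        -- x = y ++ r,  y = r ++ s
        have hy2 : x ++ s = y ++ y := by
          rw [← hs1, wpow_two]
        obtain ⟨r, hx_yr, hy_rs⟩ := split_long hy2 (by omega)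
        have hrlen : r.length = x.length - y.length := by
          have := congrArg List.length hx_yr; simp at this; omega
        have hrne : r ≠ [] := by
          intro h0; rw [h0] at hrlen; simp at hrlen; omega
        -- conjugacy structure
        have hconj : r ++ s = s ++ t := by rw [← hy_rs, hy_st]
        obtain ⟨Aw, Bw, q, hrAB, htBA, hsAB⟩ := conj_struct s.length s t r le_rfl hrne hconj
        have hABl : Aw.length + Bw.length = t.length := by
          have := congrArg List.length htBA; simp at this; omega
        have hABr : Aw.length + Bw.length = r.length := by
          have := congrArg List.length hrAB; simp at this; omega
        have hAne : Aw ≠ [] := by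
          intro h0
          subst h0
          simp at hrAB htBA hsAB
          -- y = B^(q+1)
          have hyB : y = wpow Bw (q+1) := by
            rw [hy_st, hsAB, htBA, show q + 1 = q + 1 from rfl, wpow_add, wpow_one]
          have hq1 : 1 ≤ q := by
            rcases Nat.eq_zero_or_pos q with h0|h0
            · subst h0; simp at hsAB; exact absurd hsAB hsne
            · exact h0
          exact hy Bw (q+1) (by omega) hyB
        have hBne : Bw ≠ [] := by
          intro h0
          subst h0
          simp at hrAB htBA hsAB
          have hyA : y = wpow Aw (q+2) := by
            rw [hy_st, hsAB, htBA, show q + 2 = (q + 1) + 1 from rfl, wpow_add,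
              wpow_add, wpow_one]
            try simp [List.append_assoc]
          exact hy Aw (q+2) (by omega) hyA
        have hA0 : 0 < Aw.length := List.length_pos_iff.mpr hAne
        have hB0 : 0 < Bw.length := List.length_pos_iff.mpr hBne
        have hslq : s.length = q * (Aw.length + Bw.length) + Aw.length := by
          have := congrArg List.length hsAB; simp at this; omega
        have hq2 : 2 ≤ q := by
          by_contra h0
          have hq1 : q ≤ 1 := by omega
          have h1 : q * (Aw.length + Bw.length) ≤ 1 * (Aw.length + Bw.length) :=
            Nat.mul_le_mul_right _ hq1
          -- 2|c| ≤ |s| from the side condition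
          omega
        -- g = t ++ r
        have hg_tr : g = t ++ r := by
          have h1 : x = s ++ (t ++ r) := by
            rw [hx_yr, hy_st, List.append_assoc]
          rw [hg1] at h1
          exact List.append_cancel_left h1
        -- z^M = d ++ (c^(q+2) ++ (A ++ c))
        have hAd : ∀ W : List A, Aw ++ ((Bw ++ Aw) ++ W) = (Aw ++ Bw) ++ (Aw ++ W) := by
          intro W; simp [List.append_assoc]
        have hzM : wpow z (M'+1) =
            (Bw ++ Aw) ++ (wpow (Aw ++ Bw) (q+2) ++ (Aw ++ (Aw ++ Bw))) := by
          have h1 : wpow z (M'+1) = g ++ x := by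
            have h2 : wpow x (3-2) = x := by norm_num
            rw [hg2, h2]
          rw [h1, hg_tr, hg1, hg_tr, hsAB, htBA, hrAB]
          rw [show q + 2 = 1 + q + 1 by omega, wpow_add, wpow_add, wpow_one]
          try simp [List.append_assoc]
        -- lengths bookkeeping
        have hglen : g.length = 2 * (Aw.length + Bw.length) := by
          have := congrArg List.length hg_tr; simp at this; omega
        have hMzlen : (M'+1) * z.length = g.length + x.length := by
          have h1 : wpow z (M'+1) = g ++ x := by
            have h2 : wpow x (3-2) = x := by norm_num
            rw [hg2, h2]
          have := congrArg List.length h1; simp at this; omega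
        have hzgt : 2 * (Aw.length + Bw.length) < z.length := by omega
        -- z = d ++ ζ
        have hzsplit : z ++ wpow z M' =
            (Bw ++ Aw) ++ (wpow (Aw ++ Bw) (q+2) ++ (Aw ++ (Aw ++ Bw))) := by
          rw [← hzM, wpow_succ]
        obtain ⟨zt, hzdζ, _⟩ := split_long hzsplit (by simp; omega)
        have hztlen : (zt ++ (Bw ++ Aw)).length = z.length := by
          have := congrArg List.length hzdζ; simp at this ⊢; omega
        have hz' : Primitive ((Bw ++ Aw) ++ zt) := by rw [← hzdζ]; exact hz
        have hZ2prim : Primitive (zt ++ (Bw ++ Aw)) := prim_rot hz'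
        have hrot : wpow (zt ++ (Bw ++ Aw)) (M'+1) =
            wpow (Aw ++ Bw) (q+2) ++ ((Aw ++ (Aw ++ Bw)) ++ (Bw ++ Aw)) := by
          have h1 := rot_pow (Bw ++ Aw) zt (M'+1)
          rw [← hzdζ, hzM] at h1
          have h2 : (Bw ++ Aw) ++ wpow (zt ++ (Bw ++ Aw)) (M'+1) =
              (Bw ++ Aw) ++ (wpow (Aw ++ Bw) (q+2) ++ ((Aw ++ (Aw ++ Bw)) ++ (Bw ++ Aw))) := by
            rw [h1]; simp [List.append_assoc]
          exact List.append_cancel_left h2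
        have hcne : Aw ++ Bw ≠ [] := by
          intro h0; rw [List.append_eq_nil_iff] at h0; exact hAne h0.1
        rcases le_or_gt z.length ((q+1) * (Aw.length + Bw.length)) with hci | hcii
        · -- CASE i : impossible by alignment
          obtain ⟨a, ha1, hca⟩ := pow_prefix_div hZ2prim hcne hrot (by
            rw [hztlen, show q+2-1 = q+1 by omega]
            simpa using hci)
          have h1 := congrArg List.length hca
          simp [hztlen] at h1
          have h2 : z.length ≤ a * z.length := Nat.le_mul_of_pos_left z.length (by omega)
          omega
        · -- CASE ii : q = 2, M' = 1
          have hcl : (q+1) * (Aw.length + Bw.length)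
              = q * (Aw.length + Bw.length) + (Aw.length + Bw.length) := by ring
          have hq2' : q = 2 := by
            by_contra h0
            have hq3 : 3 ≤ q := by omega
            have h1 : 3 * (Aw.length + Bw.length) ≤ q * (Aw.length + Bw.length) :=
              Nat.mul_le_mul_right _ hq3
            have h2 : M' * z.length ≥ 1 * z.length := Nat.mul_le_mul_right _ hM'1
            omega
          subst hq2'
          have hM'2 : M' = 1 := by
            by_contra h0
            have hM2 : 2 ≤ M' := by omega
            have h1 : 2 * z.length ≤ M' * z.length := Nat.mul_le_mul_right _ hM2
            omega
          subst hM'2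
          -- abbreviations
          have ha1pos : 0 < z.length - 3 * (Aw.length + Bw.length) := by omega
          set a1 : ℕ := z.length - 3 * (Aw.length + Bw.length) with ha1def
          have hAlen : Aw.length = 2 * a1 := by omega
          -- z² = g ++ (s ++ g)
          have hz2gsg : wpow z 2 = g ++ (s ++ g) := by
            rw [hzM, hg_tr, htBA, hrAB, hsAB]
            rw [show (2:ℕ)+2 = 2+(1+1) by norm_num, wpow_add, wpow_add, wpow_one, wpow_two]
            simp [List.append_assoc]
          -- z = g ++ s₁,  s = s₁ ++ s₂,  z = s₂ ++ g
          have hz2' : z ++ z = g ++ (s ++ g) := by rw [← wpow_two, hz2gsg]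
          obtain ⟨s1, hz_gs1, hrest⟩ := split_long hz2' (by omega)
          have hs1len : s1.length = z.length - g.length := by
            have := congrArg List.length hz_gs1; simp at this; omega
          obtain ⟨s2, hs_12, hz_s2g⟩ := split_long hrest (by omega)
          have hs2len : s2.length = s.length - s1.length := by
            have := congrArg List.length hs_12; simp at this; omega
          have hs2ne : s2 ≠ [] := by
            intro h0; rw [h0] at hs2len; simp at hs2len; omega
          -- conjugacy for z = g s₁ = s₂ g
          have hconj2 : s2 ++ g = g ++ s1 := by rw [← hz_s2g, hz_gs1]
          obtain ⟨u, v, k2, hs2uv, hs1vu, hguvk⟩ :=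
            conj_struct g.length g s1 s2 le_rfl hs2ne hconj2
          have huvlen : u.length + v.length = s2.length := by
            have := congrArg List.length hs2uv; simp at this; omega
          have hgk2 : g.length = k2 * (u.length + v.length) + u.length := by
            have := congrArg List.length hguvk; simp at this; omega
          have hk21 : k2 = 1 := by
            by_contra h0
            rcases Nat.lt_or_ge k2 1 with h1 | h1
            · have : k2 = 0 := by omega
              subst this
              simp at hgk2
              omega
            · have hk22 : 2 ≤ k2 := by omega
              have h2 : 2 * (u.length + v.length) ≤ k2 * (u.length + v.length) :=
                Nat.mul_le_mul_right _ hk22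
              omega
          subst hk21
          have hguv : g = (u ++ v) ++ u := by rw [hguvk, wpow_one]
          have hulen : u.length = (Aw.length + Bw.length) - a1 := by omega
          have hvlen : v.length = 2 * a1 := by omega
          -- split A
          have ha1A : a1 ≤ Aw.length := by omega
          set A1 : List A := Aw.take a1 with hA1def
          set A2 : List A := Aw.drop a1 with hA2def
          have hA12 : Aw = A1 ++ A2 := (List.take_append_drop a1 Aw).symm
          have hA1len : A1.length = a1 := by
            rw [hA1def, List.length_take]; omega
          have hA2len : A2.length = a1 := by
            rw [hA2def, List.length_drop]; omega
          -- extract u and v from g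
          have hgflat : g = (Bw ++ A1) ++ ((A2 ++ A1) ++ (A2 ++ Bw)) := by
            rw [hg_tr, htBA, hrAB]
            conv_lhs => rw [hA12]
            simp [List.append_assoc]
          have hfirst : u = Bw ++ A1 ∧ v ++ u = (A2 ++ A1) ++ (A2 ++ Bw) := by
            have h1 : u ++ (v ++ u) = (Bw ++ A1) ++ ((A2 ++ A1) ++ (A2 ++ Bw)) := by
              rw [← List.append_assoc, ← hguv, hgflat]
            exact List.append_inj h1 (by simp [hA1len]; omega)
          have hsecond : v = A2 ++ A1 ∧ u = A2 ++ Bw :=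
            List.append_inj hfirst.2 (by simp [hA1len, hA2len]; omega)
          have hR1 : Bw ++ A1 = A2 ++ Bw := by rw [← hfirst.1, hsecond.2]
          -- s₁ two ways
          have hs1form : s1 = (A2 ++ A1) ++ (Bw ++ A1) := by
            rw [hs1vu, hsecond.1, hfirst.1]
          have hsflat : s = (A1 ++ (A2 ++ (Bw ++ A1))) ++ (A2 ++ (Bw ++ (A1 ++ A2))) := by
            rw [hsAB, wpow_two]
            conv_lhs => rw [hA12]
            simp [List.append_assoc]
          have hs1form2 : s1 = A1 ++ (A2 ++ (Bw ++ A1)) := by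
            have h1 : s1 ++ s2 = (A1 ++ (A2 ++ (Bw ++ A1))) ++ (A2 ++ (Bw ++ (A1 ++ A2))) := by
              rw [← hs_12, hsflat]
            exact (List.append_inj h1 (by simp [hA1len, hA2len, hs1len, hglen]; omega)).1
          have hR2 : A2 ++ A1 = A1 ++ A2 := by
            have h1 : (A2 ++ A1) ++ (Bw ++ A1) = (A1 ++ A2) ++ (Bw ++ A1) := by
              rw [← hs1form, hs1form2]; simp [List.append_assoc]
            exact List.append_cancel_right h1
          -- commutation conclusions
          obtain ⟨ρ, i, j, hA2ρ, hA1ρ⟩ :=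
            comm_common (A2.length + A1.length) A2 A1 le_rfl hR2
          have hρne : ρ ≠ [] := by
            intro h0; subst h0
            rw [wpow_nil] at hA2ρ
            have := congrArg List.length hA2ρ
            simp [hA2len] at this
            omega
          have hρ0 : 0 < ρ.length := List.length_pos_iff.mpr hρne
          have hij : i = j := by
            have h1 := congrArg List.length hA2ρ
            have h2 := congrArg List.length hA1ρ
            simp [hA1len, hA2len] at h1 h2
            have : i * ρ.length = j * ρ.length := by omega
            exact Nat.eq_of_mul_eq_mul_right hρ0 this
          have hA1A2 : A1 = A2 := by rw [hA1ρ, hA2ρ, hij]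
          have hR1' : Bw ++ A1 = A1 ++ Bw := by rw [hR1, ← hA1A2]
          obtain ⟨τ, i2, j2, hBτ, hA1τ⟩ :=
            comm_common (Bw.length + A1.length) Bw A1 le_rfl hR1'
          have hi2 : 1 ≤ i2 := by
            rcases Nat.eq_zero_or_pos i2 with h0|h0
            · subst h0; simp at hBτ; exact absurd hBτ hBne
            · exact h0
          have hj2 : 1 ≤ j2 := by
            rcases Nat.eq_zero_or_pos j2 with h0|h0
            · subst h0; simp at hA1τ
              have := congrArg List.length hA1τ
              simp [hA1len] at this
              omega
            · exact h0
          -- y is a nontrivial power of τ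
          have hAτ : Aw = wpow τ (j2 + j2) := by
            rw [hA12, ← hA1A2, hA1τ, ← wpow_add]
          have hcτ : Aw ++ Bw = wpow τ ((j2 + j2) + i2) := by
            rw [hAτ, hBτ, ← wpow_add]
          have hc2τ : wpow (Aw ++ Bw) 2 = wpow τ (((j2+j2)+i2) * 2) := by
            rw [hcτ, wpow_wpow]
          have htτ : t = wpow τ (i2 + (j2 + j2)) := by
            rw [htBA, hAτ, hBτ, ← wpow_add]
          have hyτ : y = wpow τ ((((j2+j2)+i2) * 2 + (j2+j2)) + (i2 + (j2+j2))) := by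
            rw [hy_st, hsAB, hc2τ, hAτ, htτ, ← wpow_add, ← wpow_add]
          exact hy τ _ (by omega) hyτ


/-- Full induction step: general words. -/
theorem core0 {n : ℕ} (ih : ∀ m, m < n → LSstmt A m)
    (x y z : List A) (K L M : ℕ) (hn : (wpow x K).length = n)
    (hK : 2 ≤ K) (hL : 2 ≤ L) (hM : 2 ≤ M)
    (heq : wpow x K = wpow y L ++ wpow z M) :
    ∃ ρ i j, y = wpow ρ i ∧ z = wpow ρ j := by
  rcases eq_or_ne y [] with rfl | hyne
  · rcases eq_or_ne z [] with rfl | hzne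
    · exact ⟨[], 1, 1, by simp, by simp⟩
    · have hx : wpow x K = wpow z M := by rw [heq, wpow_nil]; simp
      have hxne : x ≠ [] := by
        intro h0; rw [h0, wpow_nil] at hx
        exact wpow_ne_nil hzne (by omega) hx.symm
      obtain ⟨ρ, i, j, hz2, hx2⟩ := pow_common hzne hxne (by omega) (by omega) hx.symm
      exact ⟨ρ, 0, i, by simp, hz2⟩
  rcases eq_or_ne z [] with rfl | hzne
  · have hx : wpow x K = wpow y L := by rw [heq, wpow_nil]; simp
    have hxne : x ≠ [] := by
      intro h0; rw [h0, wpow_nil] at hx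
      exact wpow_ne_nil hyne (by omega) hx.symm
    obtain ⟨ρ, i, j, hy2, hx2⟩ := pow_common hyne hxne (by omega) (by omega) hx.symm
    exact ⟨ρ, i, 0, hy2, by simp⟩
  have hxne : x ≠ [] := by
    intro h0
    rw [h0, wpow_nil] at heq
    have := List.append_eq_nil_iff.mp heq.symm
    exact wpow_ne_nil hyne (by omega) this.1
  -- primitivize
  obtain ⟨ρx, ex, hex, hρx, hxρ⟩ := prim_root x.length x le_rfl hxne
  obtain ⟨ρy, ey, hey, hρy, hyρ⟩ := prim_root y.length y le_rfl hyne
  obtain ⟨ρz, ez, hez, hρz, hzρ⟩ := prim_root z.length z le_rfl hzne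
  have heq' : wpow ρx (ex*K) = wpow ρy (ey*L) ++ wpow ρz (ez*M) := by
    rw [← wpow_wpow, ← wpow_wpow, ← wpow_wpow, ← hxρ, ← hyρ, ← hzρ, heq]
  have hn' : (wpow ρx (ex*K)).length = n := by
    rw [← hn, ← wpow_wpow, ← hxρ]
  have hKx : 2 ≤ ex*K := by nlinarith
  have hLy : 2 ≤ ey*L := by nlinarith
  have hMz : 2 ≤ ez*M := by nlinarith
  have htrans : (∃ ρ i j, ρy = wpow ρ i ∧ ρz = wpow ρ j) →
      ∃ ρ i j, y = wpow ρ i ∧ z = wpow ρ j := by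
    rintro ⟨ρ, i, j, h1, h2⟩
    exact ⟨ρ, i*ey, j*ez, by rw [hyρ, h1, wpow_wpow], by rw [hzρ, h2, wpow_wpow]⟩
  rcases le_or_gt ((ez*M) * ρz.length) ((ey*L) * ρy.length) with hside | hside
  · exact htrans (core1 ih ρx ρy ρz (ex*K) (ey*L) (ez*M) hn' hρx hρy hρz
      hKx hLy hMz hside heq')
  · -- reverse
    have hrev : wpow ρx.reverse (ex*K) = wpow ρz.reverse (ez*M) ++ wpow ρy.reverse (ey*L) := by
      have := congrArg List.reverse heq'
      rwa [reverse_wpow, List.reverse_append, reverse_wpow, reverse_wpow] at this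
    have hn'' : (wpow ρx.reverse (ex*K)).length = n := by
      rw [← hn']; simp
    have hside' : (ey*L) * ρy.reverse.length ≤ (ez*M) * ρz.reverse.length := by
      simpa using hside.le
    obtain ⟨ρ, i, j, h1, h2⟩ := core1 ih ρx.reverse ρz.reverse ρy.reverse
      (ex*K) (ez*M) (ey*L) hn'' (prim_reverse hρx) (prim_reverse hρz) (prim_reverse hρy)
      hKx hMz hLy hside' hrev
    apply htrans
    refine ⟨ρ.reverse, j, i, ?_, ?_⟩
    · have := congrArg List.reverse h2
      rwa [List.reverse_reverse, reverse_wpow] at this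
    · have := congrArg List.reverse h1
      rwa [List.reverse_reverse, reverse_wpow] at this

theorem LS_all (n : ℕ) : LSstmt A n := by
  induction n using Nat.strong_induction_on with
  | _ n ih =>
      intro x y z K L M hn hK hL hM heq
      exact core0 (fun m hm => ih m hm) x y z K L M hn hK hL hM heq

end LSaux

/-- If `u` and `v` are not powers of the same word, then `u ^ L ++ v ^ M` is
primitive for any `L, M ≥ 2`. -/
theorem pow_concat_primitive {A : Type*} (u v : List A)
    (h : ¬ ∃ (w : List A) (i j : ℕ), u = wpow w i ∧ v = wpow w j)
    (L M : ℕ) (hL : 2 ≤ L) (hM : 2 ≤ M) :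
    Primitive (wpow u L ++ wpow v M) := by
  intro w k hk hcontra
  apply h
  obtain ⟨ρ, i, j, h1, h2⟩ := LSaux.LS_all (wpow w k).length w u v k L M rfl hk hL hM
    hcontra.symm
  exact ⟨ρ, i, j, h1, h2⟩
end

section
/- If p·{u,v}^*·s ⊆ L for words u, v that are not powers of a common word, then L is not flat. -/
open Computability

/-- The language `w₁ ⬝ w₂^* ⬝ w₃ ⬝ w₄^* ⬝ ⋯ ⬝ w_{ℓ-1}^* ⬝ w_ℓ`, encoded by the
initial literal `w₁` and the list of pairs `(w₂, w₃), (w₄, w₅), …`. -/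
def flatAtom {A : Type*} (w₁ : List A) (ps : List (List A × List A)) : Language A :=
  {w₁} * (ps.map fun q => ({q.1} : Language A)∗ * {q.2}).prod

/-- A language is flat if it is a finite union of languages of the form
`w₁ ⬝ w₂^* ⬝ w₃ ⬝ ⋯ ⬝ w_{ℓ-1}^* ⬝ w_ℓ`. -/
def IsFlat {A : Type*} (L : Language A) : Prop :=
  ∃ (N : ℕ) (w : Fin N → List A) (ps : Fin N → List (List A × List A)),
    L = ⋃ i, flatAtom (w i) (ps i)

namespace BF
variable {A : Type*}

lemma wpow_nil (k : ℕ) : wpow ([] : List A) k = [] := by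
  induction k with
  | zero => rfl
  | succ n ih => simp [wpow, ih]

lemma wpow_length (w : List A) (k : ℕ) : (wpow w k).length = k * w.length := by
  induction k with
  | zero => simp [wpow]
  | succ n ih => simp [wpow, ih]; ring

lemma wpow_add (w : List A) (m n : ℕ) : wpow w (m + n) = wpow w m ++ wpow w n := by
  induction m with
  | zero => simp [wpow]
  | succ m ih => simpa [wpow, Nat.succ_add] using ih

lemma comm_common : ∀ fuel : ℕ, ∀ u v : List A, u.length + v.length ≤ fuel →
    u ++ v = v ++ u → ∃ (w : List A) (i j : ℕ), u = wpow w i ∧ v = wpow w j := by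
  intro fuel
  induction fuel using Nat.strong_induction_on with
  | _ fuel IH =>
    intro u v hlen hcomm
    rcases eq_or_ne u [] with rfl | hu
    · exact ⟨v, 0, 1, rfl, by simp [wpow]⟩
    rcases eq_or_ne v [] with rfl | hv
    · exact ⟨u, 1, 0, by simp [wpow], rfl⟩
    rcases le_total u.length v.length with hle | hle
    · have hpre : u <+: v := by
        have h1 : u <+: u ++ v := List.prefix_append u v
        have h2 : v <+: u ++ v := by rw [hcomm]; exact List.prefix_append v u
        exact List.prefix_of_prefix_length_le h1 h2 hle
      obtain ⟨t, rfl⟩ := hpre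
      have hct : u ++ t = t ++ u := by
        have := hcomm
        rw [List.append_assoc] at this
        exact List.append_cancel_left this
      have hfuel : u.length + t.length < fuel := by
        have := hlen
        simp [List.length_append] at this ⊢
        have hu1 : 1 ≤ u.length := by
          cases u with
          | nil => exact absurd rfl hu
          | cons a l => simp
        omega
      obtain ⟨w, i, j, hui, htj⟩ := IH _ hfuel u t le_rfl hct
      exact ⟨w, i, i + j, hui, by rw [wpow_add, hui, htj]⟩
    · have hpre : v <+: u := by
        have h1 : v <+: v ++ u := List.prefix_append v u
        have h2 : u <+: v ++ u := by rw [← hcomm]; exact List.prefix_append u v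
        exact List.prefix_of_prefix_length_le h1 h2 hle
      obtain ⟨t, rfl⟩ := hpre
      have hct : v ++ t = t ++ v := by
        have := hcomm.symm
        rw [List.append_assoc] at this
        exact List.append_cancel_left this
      have hfuel : v.length + t.length < fuel := by
        have := hlen
        simp [List.length_append] at this ⊢
        have hv1 : 1 ≤ v.length := by
          cases v with
          | nil => exact absurd rfl hv
          | cons a l => simp
        omega
      obtain ⟨w, i, j, hvi, htj⟩ := IH _ hfuel v t le_rfl hct
      exact ⟨w, i + j, i, by rw [wpow_add, hvi, htj], hvi⟩

def J (u v : List A) (l : List Bool) : List A :=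
  (l.map fun b => if b then u else v).flatten

@[simp] lemma J_nil (u v : List A) : J u v [] = [] := rfl

@[simp] lemma J_cons (u v : List A) (b : Bool) (l : List Bool) :
    J u v (b :: l) = (if b then u else v) ++ J u v l := by
  simp [J]

lemma J_append (u v : List A) (l₁ l₂ : List Bool) :
    J u v (l₁ ++ l₂) = J u v l₁ ++ J u v l₂ := by
  simp [J]

def phi (l : List Bool) : List Bool :=
  (l.map fun b => if b then [true] else [true, false]).flatten

@[simp] lemma phi_nil : phi [] = [] := rfl

@[simp] lemma phi_cons (b : Bool) (l : List Bool) :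
    phi (b :: l) = (if b then [true] else [true, false]) ++ phi l := by
  simp [phi]

lemma J_phi (u t : List A) (l : List Bool) : J u t (phi l) = J u (u ++ t) l := by
  induction l with
  | nil => rfl
  | cons b l ih =>
    cases b <;> simp [J_append, ih]

lemma J_swap (u v : List A) (l : List Bool) : J v u (l.map Bool.not) = J u v l := by
  induction l with
  | nil => rfl
  | cons c l ih => cases c <;> simp [ih]

lemma free_aux : ∀ fuel : ℕ, ∀ u v : List A, u.length + v.length ≤ fuel →
    u ++ v ≠ v ++ u → ∀ s t : List Bool, J u v s = J u v t → s = t := by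
  intro fuel
  induction fuel using Nat.strong_induction_on with
  | _ fuel IH =>
    intro u v hlen hc
    have hu : u ≠ [] := by rintro rfl; exact hc (by simp)
    have hv : v ≠ [] := by rintro rfl; exact hc (by simp)
    have key : ∀ u v : List A, u.length + v.length ≤ fuel → u ++ v ≠ v ++ u →
        u.length ≤ v.length → ∀ X Y : List Bool,
        u ++ J u v X = v ++ J u v Y → False := by
      intro u v hlen hc hle X Y h
      have hu : u ≠ [] := by rintro rfl; exact hc (by simp)
      have hpre : u <+: v := by
        have h1 : u <+: u ++ J u v X := List.prefix_append _ _
        have h2 : v <+: u ++ J u v X := by rw [h]; exact List.prefix_append _ _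
        exact List.prefix_of_prefix_length_le h1 h2 hle
      obtain ⟨t0, rfl⟩ := hpre
      have ht0 : t0 ≠ [] := by rintro rfl; exact hc (by simp)
      have hct : u ++ t0 ≠ t0 ++ u := by
        intro hcomm
        apply hc
        calc u ++ (u ++ t0) = u ++ (t0 ++ u) := by rw [hcomm]
          _ = (u ++ t0) ++ u := by rw [List.append_assoc]
      have hfuel : u.length + t0.length < fuel := by
        have hu1 : 1 ≤ u.length := List.length_pos_iff.mpr hu
        simp [List.length_append] at hlen
        omega
      have hinj := IH _ hfuel u t0 le_rfl hct
      have h2 : J u (u ++ t0) X = t0 ++ J u (u ++ t0) Y := by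
        rw [List.append_assoc] at h
        exact List.append_cancel_left h
      have h3 : J u t0 (phi X) = J u t0 (false :: phi Y) := by
        rw [J_phi, h2, ← J_phi]; simp
      have h4 := hinj _ _ h3
      cases X with
      | nil => simp at h4
      | cons a X' => cases a <;> simp at h4
    have key2 : ∀ X Y : List Bool, u ++ J u v X = v ++ J u v Y → False := by
      intro X Y h
      rcases le_total u.length v.length with hle | hle
      · exact key u v hlen hc hle X Y h
      · refine key v u (by omega) (fun h' => hc h'.symm) hle
          (Y.map Bool.not) (X.map Bool.not) ?_
        rw [J_swap, J_swap]
        exact h.symm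
    intro s
    induction s with
    | nil =>
      intro t h
      cases t with
      | nil => rfl
      | cons b t' =>
        exfalso
        rw [J_nil, J_cons] at h
        obtain ⟨h1, -⟩ := List.append_eq_nil_iff.mp h.symm
        cases b
        · exact hv (by simpa using h1)
        · exact hu (by simpa using h1)
    | cons a s' ihs =>
      intro t h
      cases t with
      | nil =>
        exfalso
        rw [J_nil, J_cons] at h
        obtain ⟨h1, -⟩ := List.append_eq_nil_iff.mp h
        cases a
        · exact hv (by simpa using h1)
        · exact hu (by simpa using h1)
      | cons b t' =>
        by_cases hab : a = b
        · subst hab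
          rw [J_cons, J_cons] at h
          have := List.append_cancel_left h
          exact congrArg (a :: ·) (ihs _ this)
        · exfalso
          rw [J_cons, J_cons] at h
          cases a <;> cases b
          · exact hab rfl
          · simp at h
            exact key2 t' s' h.symm
          · simp at h
            exact key2 s' t' h
          · exact hab rfl

lemma flatten_const : ∀ (Lc : List (List A)) (w : List A), (∀ y ∈ Lc, y = w) →
    Lc.flatten = wpow w Lc.length := by
  intro Lc w h
  induction Lc with
  | nil => rfl
  | cons a l ih =>
    simp only [List.flatten_cons, List.length_cons]
    rw [h a (by simp), ih (fun y hy => h y (by simp [hy]))]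
    rfl

lemma mem_kstar_singleton {w x : List A} (h : x ∈ ({w} : Language A)∗) :
    ∃ k, x = wpow w k := by
  obtain ⟨Lc, rfl, hLc⟩ := Language.mem_kstar.mp h
  exact ⟨Lc.length, flatten_const Lc w (fun y hy => hLc y hy)⟩

lemma prod_decomp : ∀ (qs : List (List A × List A)) (x : List A),
    x ∈ (qs.map fun q => ({q.1} : Language A)∗ * {q.2}).prod →
    ∃ ks : List ℕ, ks.length = qs.length ∧
      x = (List.zipWith (fun (q : List A × List A) k => wpow q.1 k ++ q.2) qs ks).flatten ∧
      ∀ k ∈ ks, k ≤ x.length := by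
  intro qs
  classical
  induction qs with
  | nil =>
    intro x hx
    simp only [List.map_nil, List.prod_nil] at hx
    exact ⟨[], rfl, by simpa using (Language.mem_one _).mp hx, by simp⟩
  | cons q qs ih =>
    intro x hx
    rw [List.map_cons, List.prod_cons] at hx
    obtain ⟨ab, hab, y, hy, rfl⟩ := Language.mem_mul.mp hx
    obtain ⟨c, hc, d, hd, rfl⟩ := Language.mem_mul.mp hab
    obtain ⟨k, rfl⟩ := mem_kstar_singleton hc
    have hd' : d = q.2 := hd
    subst hd'
    obtain ⟨ks, hlen, hyeq, hbd⟩ := ih y hy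
    refine ⟨(if q.1 = [] then 0 else k) :: ks, by simp [hlen], ?_, ?_⟩
    · have : wpow q.1 (if q.1 = [] then 0 else k) = wpow q.1 k := by
        split
        · next h => rw [h, wpow_nil, wpow_nil]
        · rfl
      simp [List.zipWith_cons_cons, this, hyeq, List.append_assoc]
    · intro k' hk'
      rcases List.mem_cons.mp hk' with rfl | hk'
      · split
        · exact Nat.zero_le _
        · next h =>
          have h1 : 1 ≤ q.1.length := List.length_pos_iff.mpr h
          calc k ≤ k * q.1.length := Nat.le_mul_of_pos_right k h1
            _ ≤ _ := by simp [List.length_append, wpow_length]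
      · calc k' ≤ y.length := hbd k' hk'
          _ ≤ _ := by simp [List.length_append]; omega

lemma sq_lt_two_pow : ∀ t : ℕ, 5 ≤ t → t * t < 2 ^ t := by
  intro t ht
  induction t, ht using Nat.le_induction with
  | base => norm_num
  | succ t ht ih =>
    have h3 : t * 3 ≤ t * t := Nat.mul_le_mul_left t (by omega)
    have e1 : (t + 1) * (t + 1) = t * t + 2 * t + 1 := by ring
    have e2 : 2 ^ (t + 1) = 2 ^ t * 2 := pow_succ 2 t
    omega

lemma exists_pow_lt (a M : ℕ) : ∃ n, a * (n + 1) ^ M < 2 ^ n := by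
  set K := M + a + 1 with hK
  set t := max 5 (K + 1) with ht
  have ht5 : 5 ≤ t := le_max_left _ _
  have htK : K + 1 ≤ t := le_max_right _ _
  have h2t : 1 ≤ 2 ^ t := Nat.one_le_two_pow
  refine ⟨2 ^ t - 1, ?_⟩
  have hn1 : 2 ^ t - 1 + 1 = 2 ^ t := by omega
  have hsq : t * t < 2 ^ t := sq_lt_two_pow t ht5
  have e2 : t * (K + 1) ≤ t * t := Nat.mul_le_mul_left t htK
  have e1 : t * (K + 1) = t * M + t * a + 2 * t := by rw [hK]; ring
  have e4 : a ≤ t * a := Nat.le_mul_of_pos_left a (by omega)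
  have hexp : a + t * M < 2 ^ t - 1 := by omega
  calc a * (2 ^ t - 1 + 1) ^ M = a * 2 ^ (t * M) := by rw [hn1, ← pow_mul]
    _ ≤ 2 ^ a * 2 ^ (t * M) := Nat.mul_le_mul_right _ (Nat.lt_two_pow_self (n := a)).le
    _ = 2 ^ (a + t * M) := (pow_add 2 a (t * M)).symm
    _ < 2 ^ (2 ^ t - 1) := Nat.pow_lt_pow_right one_lt_two hexp

def dup (l : List Bool) : List Bool :=
  (l.map fun b => if b then [true, false] else [false, true]).flatten

@[simp] lemma dup_nil : dup [] = [] := rfl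

@[simp] lemma dup_cons (b : Bool) (l : List Bool) :
    dup (b :: l) = b :: (!b) :: dup l := by
  cases b <;> simp [dup]

lemma dup_inj : ∀ l₁ l₂ : List Bool, dup l₁ = dup l₂ → l₁ = l₂ := by
  intro l₁
  induction l₁ with
  | nil => intro l₂ h; cases l₂ with
    | nil => rfl
    | cons b l => simp at h
  | cons a l ih =>
    intro l₂ h
    cases l₂ with
    | nil => simp at h
    | cons b l' =>
      simp only [dup_cons, List.cons.injEq] at h
      obtain ⟨h1, -, h3⟩ := h
      rw [h1, ih _ h3]

lemma J_dup_length (u v : List A) (l : List Bool) :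
    (J u v (dup l)).length = l.length * (u.length + v.length) := by
  induction l with
  | nil => simp
  | cons b l ih =>
    cases b <;> simp [ih] <;> ring

lemma J_mem_kstar (u v : List A) (l : List Bool) :
    J u v l ∈ ({u, v} : Language A)∗ := by
  apply Language.join_mem_kstar
  intro y hy
  obtain ⟨b, -, rfl⟩ := List.mem_map.mp hy
  cases b
  · exact Set.mem_insert_of_mem _ rfl
  · exact Set.mem_insert _ _

end BF

/-- If `p ⬝ {u,v}^* ⬝ s ⊆ L` for words `u`, `v` that are not powers of a common
word, then `L` is not flat. -/
theorem butterfly_not_flat {A : Type*} (L : Language A) (p s u v : List A)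
    (huv : ¬ ∃ (w : List A) (i j : ℕ), u = wpow w i ∧ v = wpow w j)
    (hsub : ({p} : Language A) * ({u, v} : Language A)∗ * {s} ≤ L) :
    ¬ IsFlat L := by
  classical
  intro hflat
  obtain ⟨N, w, ps, hL⟩ := hflat
  have hcomm : u ++ v ≠ v ++ u := fun h =>
    huv (BF.comm_common (u.length + v.length) u v le_rfl h)
  have hfree := BF.free_aux (u.length + v.length) u v le_rfl hcomm
  set L0 := u.length + v.length with hL0
  set M := (Finset.univ : Finset (Fin N)).sup (fun i => (ps i).length) with hM
  set c := p.length + s.length + 1 + L0 with hc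
  have hE : ∀ n : ℕ, 2 ^ n ≤ N * (c * (n + 1)) ^ M := by
    intro n
    set ℓ := p.length + n * L0 + s.length with hℓ
    set E : (Fin n → Bool) → List A :=
      fun σ => p ++ BF.J u v (BF.dup (List.ofFn σ)) ++ s with hEdef
    have hEinj : Function.Injective E := by
      intro σ τ h
      simp only [hEdef] at h
      have h1 := List.append_cancel_left (List.append_cancel_right h)
      exact List.ofFn_injective (BF.dup_inj _ _ (hfree _ _ h1))
    have hEmem : ∀ σ, E σ ∈ L := by
      intro σ
      apply hsub
      exact Language.append_mem_mul
        (Language.append_mem_mul rfl (BF.J_mem_kstar u v _)) rfl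
    have hElen : ∀ σ, (E σ).length = ℓ := by
      intro σ
      simp [hEdef, BF.J_dup_length, hℓ, hL0, Nat.add_assoc]
    set Tn : Finset (List A) := Finset.image E Finset.univ with hTn
    have hTcard : Tn.card = 2 ^ n := by
      rw [hTn, Finset.card_image_of_injective _ hEinj, Finset.card_univ]
      simp
    set B : Fin N → Finset (List A) := fun i =>
      Finset.image (fun ks : Fin (ps i).length → Fin (ℓ + 1) =>
        (w i) ++ (List.zipWith (fun (q : List A × List A) k => wpow q.1 k ++ q.2) (ps i)
          (List.ofFn fun j => ((ks j : ℕ)))).flatten) Finset.univ with hB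
    have hsubT : Tn ⊆ Finset.univ.biUnion B := by
      intro x hx
      obtain ⟨σ, -, rfl⟩ := Finset.mem_image.mp hx
      have hxL : E σ ∈ L := hEmem σ
      rw [hL] at hxL
      obtain ⟨i, hxi⟩ := Set.mem_iUnion.mp hxL
      obtain ⟨a, ha, y, hy, hxy⟩ := Language.mem_mul.mp hxi
      have ha' : a = w i := ha
      subst ha'
      obtain ⟨ks, hlen, hyeq, hbd⟩ := BF.prod_decomp (ps i) y hy
      have hylen : y.length ≤ ℓ := by
        have := hElen σ
        rw [← hxy] at this
        simp [List.length_append] at this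
        omega
      refine Finset.mem_biUnion.mpr ⟨i, Finset.mem_univ i, ?_⟩
      refine Finset.mem_image.mpr
        ⟨fun j => ⟨ks.get (Fin.cast hlen.symm j), by
          have := hbd (ks.get (Fin.cast hlen.symm j)) (List.get_mem ks (Fin.cast hlen.symm j))
          omega⟩, Finset.mem_univ _, ?_⟩
      have hofn : (List.ofFn fun j : Fin (ps i).length =>
          ks.get (Fin.cast hlen.symm j)) = ks := by
        apply List.ext_get
        · simp [hlen]
        · intro j h1 h2
          simp [List.get_ofFn]
      simp only [hofn]
      rw [← hyeq, hxy]
    have h1 : Tn.card ≤ ∑ i, (B i).card :=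
      le_trans (Finset.card_le_card hsubT) Finset.card_biUnion_le
    have h2 : ∀ i, (B i).card ≤ (ℓ + 1) ^ M := by
      intro i
      calc (B i).card ≤ Fintype.card (Fin (ps i).length → Fin (ℓ + 1)) := by
            rw [← Finset.card_univ]; exact Finset.card_image_le
        _ = (ℓ + 1) ^ (ps i).length := by simp
        _ ≤ (ℓ + 1) ^ M := Nat.pow_le_pow_right (by omega)
            (by rw [hM]; exact Finset.le_sup (f := fun j => (ps j).length) (Finset.mem_univ i))
    have h3 : 2 ^ n ≤ N * (ℓ + 1) ^ M := by
      calc 2 ^ n = Tn.card := hTcard.symm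
        _ ≤ ∑ i, (B i).card := h1
        _ ≤ ∑ _i : Fin N, (ℓ + 1) ^ M := Finset.sum_le_sum fun i _ => h2 i
        _ = N * (ℓ + 1) ^ M := by simp [Finset.sum_const, mul_comm]
    have h5 : n * L0 ≤ n * c := Nat.mul_le_mul_left n (by omega)
    have h4 : ℓ + 1 ≤ c * (n + 1) := by
      calc ℓ + 1 = n * L0 + (p.length + s.length + 1) := by rw [hℓ]; ring
        _ ≤ n * c + c := Nat.add_le_add h5 (by omega)
        _ = c * (n + 1) := by ring
    calc 2 ^ n ≤ N * (ℓ + 1) ^ M := h3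
      _ ≤ N * (c * (n + 1)) ^ M := Nat.mul_le_mul_left N (Nat.pow_le_pow_left h4 M)
  obtain ⟨n, hn⟩ := BF.exists_pow_lt (N * c ^ M) M
  have h6 : 2 ^ n ≤ N * c ^ M * (n + 1) ^ M := by
    have := hE n
    rw [mul_pow, ← mul_assoc] at this
    exact this
  exact absurd (lt_of_le_of_lt h6 hn) (lt_irrefl _)
end
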